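/- Let Φ be ≤_k-monotone on a bilattice, I an element with support S(I), and Φ'(I) the limit of K₀ = S(I), K_{i+1} = Φ(K_i) ⊕ K_i. If K is any element satisfying K = Φ(K) ⊕ S(I), then Φ'(I) ≤_k K. That is, Φ'(I) is a ≤_k-lower bound of all fixed-points of the S(I)-completed operator. -/

import Mathlib

/-- A (complete, interlaced) bilattice: a carrier `B` with two partial orders,
the truth order `tle` and the knowledge order `kle`, each giving `B` the
structure of a complete lattice, such that all four binary lattice operations
are monotone with respect to both orderings (interlacing), and with `fbot`
the least element of the truth order. -/
structure Bilattice (B : Type*) where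
  tle : B → B → Prop
  kle : B → B → Prop
  tle_refl : ∀ x, tle x x
  tle_trans : ∀ {x y z}, tle x y → tle y z → tle x z
  tle_antisymm : ∀ {x y}, tle x y → tle y x → x = y
  kle_refl : ∀ x, kle x x
  kle_trans : ∀ {x y z}, kle x y → kle y z → kle x z
  kle_antisymm : ∀ {x y}, kle x y → kle y x → x = y
  tinf : B → B → B
  tsup : B → B → B
  kinf : B → B → B
  ksup : B → B → B
  tinf_le_left : ∀ x y, tle (tinf x y) x
  tinf_le_right : ∀ x y, tle (tinf x y) y
  le_tinf : ∀ {x y z}, tle z x → tle z y → tle z (tinf x y)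
  le_tsup_left : ∀ x y, tle x (tsup x y)
  le_tsup_right : ∀ x y, tle y (tsup x y)
  tsup_le : ∀ {x y z}, tle x z → tle y z → tle (tsup x y) z
  kinf_le_left : ∀ x y, kle (kinf x y) x
  kinf_le_right : ∀ x y, kle (kinf x y) y
  le_kinf : ∀ {x y z}, kle z x → kle z y → kle z (kinf x y)
  le_ksup_left : ∀ x y, kle x (ksup x y)
  le_ksup_right : ∀ x y, kle y (ksup x y)
  ksup_le : ∀ {x y z}, kle x z → kle y z → kle (ksup x y) z
  tSInf : Set B → B
  tSInf_le : ∀ S, ∀ x ∈ S, tle (tSInf S) x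
  le_tSInf : ∀ S x, (∀ y ∈ S, tle x y) → tle x (tSInf S)
  tSSup : Set B → B
  le_tSSup : ∀ S, ∀ x ∈ S, tle x (tSSup S)
  tSSup_le : ∀ S x, (∀ y ∈ S, tle y x) → tle (tSSup S) x
  kSInf : Set B → B
  kSInf_le : ∀ S, ∀ x ∈ S, kle (kSInf S) x
  le_kSInf : ∀ S x, (∀ y ∈ S, kle x y) → kle x (kSInf S)
  kSSup : Set B → B
  le_kSSup : ∀ S, ∀ x ∈ S, kle x (kSSup S)
  kSSup_le : ∀ S x, (∀ y ∈ S, kle y x) → kle (kSSup S) x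
  fbot : B
  fbot_le : ∀ x, tle fbot x
  tinf_mono_t : ∀ {x y x' y'}, tle x y → tle x' y' → tle (tinf x x') (tinf y y')
  tinf_mono_k : ∀ {x y x' y'}, kle x y → kle x' y' → kle (tinf x x') (tinf y y')
  tsup_mono_t : ∀ {x y x' y'}, tle x y → tle x' y' → tle (tsup x x') (tsup y y')
  tsup_mono_k : ∀ {x y x' y'}, kle x y → kle x' y' → kle (tsup x x') (tsup y y')
  kinf_mono_t : ∀ {x y x' y'}, tle x y → tle x' y' → tle (kinf x x') (kinf y y')
  kinf_mono_k : ∀ {x y x' y'}, kle x y → kle x' y' → kle (kinf x x') (kinf y y')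
  ksup_mono_t : ∀ {x y x' y'}, tle x y → tle x' y' → tle (ksup x x') (ksup y y')
  ksup_mono_k : ∀ {x y x' y'}, kle x y → kle x' y' → kle (ksup x x') (ksup y y')

open Ordinal in
/-- For ≤_k-monotone Φ, I with support SI, and the iteration K₀ = SI,
K_{i+1} = Φ(K_i) ⊕ K_i (knowledge joins at limits) whose limit is Φ'(I):
if Kfix satisfies Kfix = Φ(Kfix) ⊕ SI then every iterate (hence the limit
Φ'(I)) is ≤_k Kfix; i.e. Φ'(I) is a ≤_k-lower bound of all fixed points of
the SI-completed operator. -/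
theorem stmt_17 {B : Type*} (L : Bilattice B)
    (Φ : B → B) (hΦ : ∀ {x y : B}, L.kle x y → L.kle (Φ x) (Φ y))
    (I SI : B)
    (hSI : (L.kle SI L.fbot ∧ L.kle SI (Φ (L.ksup I SI))) ∧
      ∀ J, (L.kle J L.fbot ∧ L.kle J (Φ (L.ksup I J))) → L.kle J SI)
    (K : Ordinal → B)
    (h0 : K 0 = SI)
    (hsucc : ∀ i : Ordinal, K (Order.succ i) = L.ksup (Φ (K i)) (K i))
    (hlim : ∀ l : Ordinal, Order.IsSuccLimit l → K l = L.kSSup (K '' Set.Iio l))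
    (Kfix : B) (hKfix : Kfix = L.ksup (Φ Kfix) SI) :
    ∀ i : Ordinal, L.kle (K i) Kfix := by
  intro i
  induction i using Ordinal.induction with
  | _ i ih =>
    rcases Ordinal.zero_or_succ_or_isSuccLimit i with h | ⟨j, rfl⟩ | h
    · subst h
      rw [h0, hKfix]
      exact L.le_ksup_right _ _
    · rw [hsucc]
      have hj := ih j (Order.lt_succ j)
      refine L.ksup_le ?_ hj
      have : L.kle (Φ (K j)) (Φ Kfix) := hΦ hj
      refine L.kle_trans this ?_
      nth_rewrite 2 [hKfix]; exact L.le_ksup_left _ _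
    · rw [hlim i h]
      refine L.kSSup_le _ _ ?_
      rintro y ⟨j, hj, rfl⟩
      exact ih j hj
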